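/- Suppose U ξ = ξ. Then T(ξ/‖ξ‖, 1) = (a + ‖ξ‖)·(ξ/‖ξ‖, 1) and T(−ξ/‖ξ‖, 1) = (a − ‖ξ‖)·(−ξ/‖ξ‖, 1); moreover (a + ‖ξ‖)·(a − ‖ξ‖) = 1, both a + ‖ξ‖ and a − ‖ξ‖ are positive real numbers, and neither equals 1. -/

import Mathlib

open scoped InnerProductSpace

noncomputable section

variable {H : Type*} [NormedAddCommGroup H] [InnerProductSpace ℂ H]

/-- The vector `(x, z)` of the Hilbert space direct sum `H ⊕ ℂ`. -/
def mkE (x : H) (z : ℂ) : WithLp 2 (H × ℂ) := (WithLp.equiv 2 (H × ℂ)).symm (x, z)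

lemma mkE_eq {x x' : H} {z z' : ℂ} (hx : x = x') (hz : z = z') : mkE x z = mkE x' z' := by rw [hx, hz]

lemma mkE_smul (c : ℂ) (x : H) (z : ℂ) : c • mkE x z = mkE (c • x) (c * z) := rfl

/-- With `ξ ≠ 0`, `a = √(1 + ‖ξ‖²)`, `A x = x + ((a−1)/‖ξ‖²)·⟨x,ξ⟩·ξ`, `U` unitary with
`U ξ = ξ`, and `T(x,z) = (U(A x) + z·U ξ, ⟨x,ξ⟩ + a·z)`: then `(±ξ/‖ξ‖, 1)` are eigenvectors
of `T` with eigenvalues `a ± ‖ξ‖`, which are positive reals, mutually inverse, and neither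
equals `1`.
(The paper's inner product `⟨x,y⟩` is linear in the first slot, i.e. `⟪y,x⟫_ℂ` in Mathlib's
convention.) -/
theorem stmt12 [CompleteSpace H]
    (ξ : H) (hξ : ξ ≠ 0) (a : ℝ) (ha : a = Real.sqrt (1 + ‖ξ‖ ^ 2))
    (A : H →L[ℂ] H)
    (hA : ∀ x : H, A x = x + ((((a - 1) / ‖ξ‖ ^ 2 : ℝ) : ℂ) * ⟪ξ, x⟫_ℂ) • ξ)
    (U : H →L[ℂ] H) (hU : U ∈ unitary (H →L[ℂ] H)) (hUξ : U ξ = ξ)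
    (T : WithLp 2 (H × ℂ) →L[ℂ] WithLp 2 (H × ℂ))
    (hT : ∀ (x : H) (z : ℂ),
      T (mkE x z) = mkE (U (A x) + z • U ξ) (⟪ξ, x⟫_ℂ + (a : ℂ) * z)) :
    T (mkE ((‖ξ‖ : ℂ)⁻¹ • ξ) 1) = ((a + ‖ξ‖ : ℝ) : ℂ) • mkE ((‖ξ‖ : ℂ)⁻¹ • ξ) 1 ∧
      T (mkE (-((‖ξ‖ : ℂ)⁻¹ • ξ)) 1) = ((a - ‖ξ‖ : ℝ) : ℂ) • mkE (-((‖ξ‖ : ℂ)⁻¹ • ξ)) 1 ∧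
      (a + ‖ξ‖) * (a - ‖ξ‖) = 1 ∧
      0 < a + ‖ξ‖ ∧ 0 < a - ‖ξ‖ ∧ a + ‖ξ‖ ≠ 1 ∧ a - ‖ξ‖ ≠ 1 := by
  have hn : (0:ℝ) < ‖ξ‖ := norm_pos_iff.mpr hξ
  have hnC : (‖ξ‖ : ℂ) ≠ 0 := by exact_mod_cast hn.ne'
  have ha2 : a ^ 2 = 1 + ‖ξ‖ ^ 2 := by
    rw [ha]; exact Real.sq_sqrt (by positivity)
  have ha0 : 0 ≤ a := ha ▸ Real.sqrt_nonneg _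
  have ha1 : 1 < a := by nlinarith
  have hiξ : ⟪ξ, (‖ξ‖ : ℂ)⁻¹ • ξ⟫_ℂ = (‖ξ‖ : ℂ) := by
    rw [inner_smul_right, inner_self_eq_norm_sq_to_K, RCLike.ofReal_eq_complex_ofReal]
    field_simp
  have key : ∀ c : ℂ, U (A (c • ξ)) + (1:ℂ) • U ξ = ((((a:ℂ) * c + 1)) : ℂ) • ξ := by
    intro c
    rw [hA, inner_smul_right, inner_self_eq_norm_sq_to_K, RCLike.ofReal_eq_complex_ofReal]
    rw [map_add, map_smul, map_smul, hUξ, one_smul]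
    match_scalars
    field_simp
    ring
  refine ⟨?_, ?_, by nlinarith, by nlinarith, by nlinarith, by nlinarith, by nlinarith⟩
  · rw [hT, mkE_smul]
    have h1 : U (A ((‖ξ‖:ℂ)⁻¹ • ξ)) + (1:ℂ) • U ξ
        = ((a:ℂ) * (‖ξ‖:ℂ)⁻¹ + 1) • ξ := key _
    rw [h1, hiξ]
    refine mkE_eq ?_ ?_
    · rw [smul_smul]; congr 1; field_simp; push_cast; try ring
    · push_cast; ring
  · rw [hT, mkE_smul]
    have h1 : U (A ((-(‖ξ‖:ℂ)⁻¹) • ξ)) + (1:ℂ) • U ξ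
        = ((a:ℂ) * (-(‖ξ‖:ℂ)⁻¹) + 1) • ξ := key _
    rw [show -((‖ξ‖:ℂ)⁻¹ • ξ) = (-(‖ξ‖:ℂ)⁻¹) • ξ from (neg_smul _ _).symm] at *
    rw [h1, inner_smul_right, inner_self_eq_norm_sq_to_K, RCLike.ofReal_eq_complex_ofReal]
    refine mkE_eq ?_ ?_
    · rw [smul_smul]; congr 1; field_simp; push_cast; try ring
    · field_simp; push_cast; ring
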